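/- Let Q ∈ ℝ^{n×n} be symmetric and suppose there exist finitely many invertible matrices V₁, …, V_r ∈ ℝ^{n×n} whose simplicial cones cover the nonnegative orthant (i.e., every x ≥ 0 can be written as V_k z for some k and some z ≥ 0), and for each k suppose V_kᵀ Q V_k = P_k + N_k where P_k is positive semidefinite and N_k has all entries nonnegative. Then Q is copositive: xᵀQx ≥ 0 for all x ≥ 0. -/

import Mathlib

open Matrix

theorem disjunctive_PN_copositive (n r : ℕ) (Q : Matrix (Fin n) (Fin n) ℝ)
    (hQ : Q.IsSymm)
    (V P N : Fin r → Matrix (Fin n) (Fin n) ℝ)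
    (hVinv : ∀ k, IsUnit (V k).det)
    (hcover : ∀ x : Fin n → ℝ, (∀ i, 0 ≤ x i) →
      ∃ k, ∃ z : Fin n → ℝ, (∀ i, 0 ≤ z i) ∧ x = (V k).mulVec z)
    (hdecomp : ∀ k, (V k)ᵀ * Q * (V k) = P k + N k)
    (hP : ∀ k, (P k).PosSemidef)
    (hN : ∀ k i j, 0 ≤ N k i j) :
    ∀ x : Fin n → ℝ, (∀ i, 0 ≤ x i) → 0 ≤ x ⬝ᵥ Q.mulVec x := by
  intro x hx
  obtain ⟨k, z, hz, rfl⟩ := hcover x hx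
  have key : (V k).mulVec z ⬝ᵥ Q.mulVec ((V k).mulVec z)
      = z ⬝ᵥ ((V k)ᵀ * Q * V k).mulVec z := by
    simp [dotProduct_mulVec, ← vecMul_vecMul, vecMul_transpose]
  rw [key, hdecomp k, add_mulVec, dotProduct_add]
  have h1 : 0 ≤ z ⬝ᵥ (P k).mulVec z := by
    have := (hP k).dotProduct_mulVec_nonneg z
    simpa [dotProduct, mulVec, dotProduct] using this
  have h2 : 0 ≤ z ⬝ᵥ (N k).mulVec z := by
    simp only [dotProduct, mulVec]
    apply Finset.sum_nonneg
    intro i _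
    apply mul_nonneg (hz i)
    apply Finset.sum_nonneg
    intro j _
    exact mul_nonneg (hN k i j) (hz j)
  linarith
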